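/- Let γ>0, ε ∈ (0,1) and let (u_ε,P_ε) be a smooth solution of the viscous short pulse system on the half-line. Then for each t>0: ∫₀^∞ u_ε(t,x)P_ε(t,x) dx ≤ ‖u_ε(t,·)‖²_{L²(0,∞)}. -/

import Mathlib

open MeasureTheory Filter Set

/-- The viscous short pulse system on the half-line `(0,∞)`:
`∂ₜu − (1/2)u²∂ₓu = γP + ε∂ₓₓu`, `−ε∂ₓₓP + ∂ₓP = u`, with homogeneous
boundary conditions `u(t,0) = P(t,0) = 0`, `u(t,·), ∂ₓu(t,·) ∈ L²(0,∞)` and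
decay of `u, ∂ₓu, P, ∂ₓP` as `x → ∞`.  The functions `ut, ux, uxx, Px, Pxx`
are the indicated partial derivatives of `u` and `P`. -/
structure ViscousSPEHalf (γ ε : ℝ) (u P ut ux uxx Px Pxx : ℝ → ℝ → ℝ) : Prop where
  hut : ∀ t x : ℝ, HasDerivAt (fun τ => u τ x) (ut t x) t
  hux : ∀ t x : ℝ, HasDerivAt (fun y => u t y) (ux t x) x
  huxx : ∀ t x : ℝ, HasDerivAt (fun y => ux t y) (uxx t x) x
  hPx : ∀ t x : ℝ, HasDerivAt (fun y => P t y) (Px t x) x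
  hPxx : ∀ t x : ℝ, HasDerivAt (fun y => Px t y) (Pxx t x) x
  hequ : ∀ t > (0:ℝ), ∀ x > (0:ℝ),
    ut t x - 1 / 2 * (u t x) ^ 2 * ux t x = γ * P t x + ε * uxx t x
  heqP : ∀ t > (0:ℝ), ∀ x > (0:ℝ), -ε * Pxx t x + Px t x = u t x
  hbu : ∀ t : ℝ, u t 0 = 0
  hbP : ∀ t : ℝ, P t 0 = 0
  huL2 : ∀ t > (0:ℝ), MeasureTheory.IntegrableOn (fun x => (u t x) ^ 2) (Set.Ioi 0)
  huxL2 : ∀ t > (0:ℝ), MeasureTheory.IntegrableOn (fun x => (ux t x) ^ 2) (Set.Ioi 0)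
  hdu : ∀ t > (0:ℝ), Filter.Tendsto (fun x => u t x) Filter.atTop (nhds 0)
  hdux : ∀ t > (0:ℝ), Filter.Tendsto (fun x => ux t x) Filter.atTop (nhds 0)
  hdP : ∀ t > (0:ℝ), Filter.Tendsto (fun x => P t x) Filter.atTop (nhds 0)
  hdPx : ∀ t > (0:ℝ), Filter.Tendsto (fun x => Px t x) Filter.atTop (nhds 0)

/-- For each `t > 0`,
`∫₀^∞ u_ε(t,x) P_ε(t,x) dx ≤ ‖u_ε(t,·)‖²_{L²(0,∞)}`. -/
theorem viscous_SPE_halfline_uP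
    (γ ε : ℝ) (hγ : 0 < γ) (hε : ε ∈ Set.Ioo (0:ℝ) 1)
    (u P ut ux uxx Px Pxx : ℝ → ℝ → ℝ)
    (h : ViscousSPEHalf γ ε u P ut ux uxx Px Pxx) :
    ∀ t > (0:ℝ),
      (∫ x in Set.Ioi (0:ℝ), u t x * P t x)
        ≤ ∫ x in Set.Ioi (0:ℝ), (u t x) ^ 2 := by
  intro t ht
  by_cases hint : IntegrableOn (fun x => u t x * P t x) (Set.Ioi 0) volume
  · -- main case : energy identity
    have hucont : Continuous (fun x => u t x) :=
      (Differentiable.continuous fun x => (h.hux t x).differentiableAt)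
    have hPcont : Continuous (fun x => P t x) :=
      (Differentiable.continuous fun x => (h.hPx t x).differentiableAt)
    have hPxcont : Continuous (fun x => Px t x) :=
      (Differentiable.continuous fun x => (h.hPxx t x).differentiableAt)
    set g : ℝ → ℝ := fun x => (u t x) ^ 2 - u t x * P t x with hg_def
    set W : ℝ → ℝ := fun x =>
      -ε * (Px t x) ^ 2 + ε * (Px t x * P t x) - (P t x) ^ 2 / 2 with hW_def
    set Wd : ℝ → ℝ := fun x =>
      -ε * (2 * Px t x * Pxx t x) + ε * (Pxx t x * P t x + Px t x * Px t x)
        - 2 * P t x * Px t x / 2 with hWd_def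
    have hgcont : Continuous g := (hucont.pow 2).sub (hucont.mul hPcont)
    have hW : ∀ x : ℝ, HasDerivAt W (Wd x) x := by
      intro x
      have h1 := h.hPxx t x
      have h2 := h.hPx t x
      have := ((((h1.pow 2).const_mul (-ε)).add ((h1.mul h2).const_mul ε)).sub
        ((h2.pow 2).div_const 2))
      exact this.congr_deriv (by simp [hWd_def])
    set ψ : ℝ → ℝ := fun x => (∫ s in (0:ℝ)..x, g s) - W x with hψ_def
    have hψ : ∀ x : ℝ, HasDerivAt ψ (g x - Wd x) x := by
      intro x
      have hI : HasDerivAt (fun y => ∫ s in (0:ℝ)..y, g s) (g x) x :=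
        intervalIntegral.integral_hasDerivAt_right (hgcont.intervalIntegrable 0 x)
          (hgcont.stronglyMeasurable.stronglyMeasurableAtFilter) hgcont.continuousAt
      exact hI.sub (hW x)
    have hmono : MonotoneOn ψ (Set.Ici 0) := by
      apply monotoneOn_of_deriv_nonneg (convex_Ici 0)
      · exact (Differentiable.continuous fun x => (hψ x).differentiableAt).continuousOn
      · exact fun x _ => (hψ x).differentiableAt.differentiableWithinAt
      · intro x hx
        rw [interior_Ici] at hx
        rw [(hψ x).deriv]
        have he := h.heqP t ht x hx
        have key : g x - Wd x = ε ^ 2 * (Pxx t x) ^ 2 + (1 - ε) * (Px t x) ^ 2 := by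
          simp only [hg_def, hWd_def, ← he]
          ring
        rw [key]
        have h1 : (0:ℝ) ≤ ε ^ 2 * (Pxx t x) ^ 2 := by positivity
        have h2 : (0:ℝ) ≤ (1 - ε) * (Px t x) ^ 2 :=
          mul_nonneg (by linarith [hε.2]) (sq_nonneg _)
        linarith
    have hψ0 : 0 ≤ ψ 0 := by
      have hb := h.hbP t
      simp only [hψ_def, hW_def, intervalIntegral.integral_same, hb]
      nlinarith [mul_nonneg hε.1.le (sq_nonneg (Px t 0))]
    have hWlim : Tendsto W atTop (nhds 0) := by
      have l1 := h.hdPx t ht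
      have l2 := h.hdP t ht
      have := (((l1.pow 2).const_mul (-ε)).add ((l1.mul l2).const_mul ε)).sub
        ((l2.pow 2).div_const 2)
      simpa [hW_def, neg_mul] using this
    have T1 := intervalIntegral_tendsto_integral_Ioi 0 (h.huL2 t ht) tendsto_id
    have T2 := intervalIntegral_tendsto_integral_Ioi 0 hint tendsto_id
    have Tg : Tendsto (fun b => ∫ s in (0:ℝ)..b, g s) atTop
        (nhds ((∫ x in Set.Ioi (0:ℝ), (u t x) ^ 2) - ∫ x in Set.Ioi (0:ℝ), u t x * P t x)) := by
      have hsplit : ∀ b : ℝ, (∫ s in (0:ℝ)..b, g s)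
          = (∫ s in (0:ℝ)..b, (u t s) ^ 2) - ∫ s in (0:ℝ)..b, u t s * P t s := fun b =>
        intervalIntegral.integral_sub ((hucont.pow 2).intervalIntegrable 0 b)
          ((hucont.mul hPcont).intervalIntegrable 0 b)
      simp only [hsplit]
      exact T1.sub T2
    have hψlim : Tendsto ψ atTop
        (nhds (((∫ x in Set.Ioi (0:ℝ), (u t x) ^ 2) - ∫ x in Set.Ioi (0:ℝ), u t x * P t x) - 0)) :=
      Tg.sub hWlim
    have hfin : (0:ℝ) ≤ ((∫ x in Set.Ioi (0:ℝ), (u t x) ^ 2)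
        - ∫ x in Set.Ioi (0:ℝ), u t x * P t x) - 0 := by
      refine ge_of_tendsto hψlim ?_
      filter_upwards [eventually_ge_atTop (0:ℝ)] with b hb
      exact le_trans hψ0 (hmono (Set.self_mem_Ici) hb hb)
    linarith
  · rw [integral_undef hint]
    exact integral_nonneg fun x => sq_nonneg _
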